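/- arXiv:2301.12226 — 2 statements merged into one kernel-verified Lean document; each statement's English description precedes it below -/
import Mathlib

section
/- Let K ≥ 1 be an integer and let (x_i)_{i=0}^K be a sequence of reals with x_0 = 0 satisfying the recursion x_{i+1} ≥ (1 - 1/K)·x_i + OPT/K - ε₁·ε₂ - i·ε₂/K for all 0 ≤ i < K, where OPT, ε₁, ε₂ ≥ 0. Then x_K ≥ (1 - (1 - 1/K)^K)·(OPT - K·ε₁·ε₂) - ε₂·∑_{i=0}^{K-1}(1 - 1/K)^{K-i-1}·(i/K). -/
theorem cauim_recursion (K : ℕ) (hK : 1 ≤ K) (x : ℕ → ℝ)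
    (OPT ε₁ ε₂ : ℝ) (hOPT : 0 ≤ OPT) (hε₁ : 0 ≤ ε₁) (hε₂ : 0 ≤ ε₂)
    (hx0 : x 0 = 0)
    (hrec : ∀ i < K, x (i + 1) ≥ (1 - 1 / (K : ℝ)) * x i + OPT / K - ε₁ * ε₂ - (i : ℝ) * ε₂ / K) :
    x K ≥ (1 - (1 - 1 / (K : ℝ)) ^ K) * (OPT - (K : ℝ) * ε₁ * ε₂)
      - ε₂ * ∑ i ∈ Finset.range K, (1 - 1 / (K : ℝ)) ^ (K - i - 1) * ((i : ℝ) / K) := by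
  set q : ℝ := 1 - 1 / (K : ℝ) with hq
  have hKpos : (0 : ℝ) < K := by exact_mod_cast hK
  have hKne : (K : ℝ) ≠ 0 := ne_of_gt hKpos
  have hq0 : 0 ≤ q := by
    rw [hq, sub_nonneg, div_le_one hKpos]
    exact_mod_cast hK
  have key : ∀ n, n ≤ K →
      x n ≥ ∑ i ∈ Finset.range n, q ^ (n - 1 - i) * (OPT / K - ε₁ * ε₂ - (i : ℝ) * ε₂ / K) := by
    intro n
    induction n with
    | zero => intro _; simp [hx0]
    | succ n ih =>
      intro hn
      have hnK : n < K := hn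
      have h1 := hrec n hnK
      have h2 := ih (le_of_lt hnK)
      have h3 : q * (∑ i ∈ Finset.range n, q ^ (n - 1 - i) * (OPT / K - ε₁ * ε₂ - (i : ℝ) * ε₂ / K))
          + (OPT / K - ε₁ * ε₂ - (n : ℝ) * ε₂ / K)
          = ∑ i ∈ Finset.range (n + 1), q ^ (n + 1 - 1 - i) * (OPT / K - ε₁ * ε₂ - (i : ℝ) * ε₂ / K) := by
        rw [Finset.sum_range_succ, Finset.mul_sum]
        congr 1
        · apply Finset.sum_congr rfl
          intro i hi
          have hi' : i < n := Finset.mem_range.mp hi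
          have : n + 1 - 1 - i = (n - 1 - i) + 1 := by omega
          rw [this, pow_succ]
          ring
        · simp
      calc x (n + 1) ≥ q * x n + OPT / K - ε₁ * ε₂ - (n : ℝ) * ε₂ / K := h1
        _ ≥ q * (∑ i ∈ Finset.range n, q ^ (n - 1 - i) * (OPT / K - ε₁ * ε₂ - (i : ℝ) * ε₂ / K))
            + OPT / K - ε₁ * ε₂ - (n : ℝ) * ε₂ / K := by
            have := mul_le_mul_of_nonneg_left h2 hq0
            linarith
        _ = _ := by rw [← h3]; ring
  have hxK := key K le_rfl
  have hsplit : ∑ i ∈ Finset.range K, q ^ (K - 1 - i) * (OPT / K - ε₁ * ε₂ - (i : ℝ) * ε₂ / K)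
      = (OPT / K - ε₁ * ε₂) * (∑ j ∈ Finset.range K, q ^ j)
        - ε₂ * ∑ i ∈ Finset.range K, q ^ (K - i - 1) * ((i : ℝ) / K) := by
    rw [Finset.mul_sum, Finset.mul_sum,
      ← Finset.sum_range_reflect (fun j => (OPT / (K:ℝ) - ε₁ * ε₂) * q ^ j) K,
      ← Finset.sum_sub_distrib]
    apply Finset.sum_congr rfl
    intro i hi
    have hi' : i < K := Finset.mem_range.mp hi
    have e1 : K - 1 - i = K - i - 1 := by omega
    rw [e1]
    ring
  have hgeom : ∑ j ∈ Finset.range K, q ^ j = (K : ℝ) * (1 - q ^ K) := by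
    have h1q : 1 - q = 1 / (K : ℝ) := by rw [hq]; ring
    have hne : q ≠ 1 := by
      rw [hq]; intro h
      have : (1 : ℝ) / K = 0 := by linarith
      simp [hKne] at this
    have h2 : q - 1 = -(1 / (K : ℝ)) := by rw [hq]; ring
    rw [geom_sum_eq hne, h2]
    field_simp
    ring
  rw [hsplit, hgeom] at hxK
  have heq : (OPT / K - ε₁ * ε₂) * ((K : ℝ) * (1 - q ^ K))
      = (1 - q ^ K) * (OPT - (K : ℝ) * ε₁ * ε₂) := by
    field_simp
  rw [heq] at hxK
  exact hxK
end

section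
/- Let K ≥ 1 and suppose reals x_0 = 0, x_1, …, x_K satisfy x_{i+1} ≥ ((1-γ)/(1+γ))·((1 - 1/K)·x_i + OPT'/K) for 0 ≤ i < K, where 0 < γ < 1 and OPT' ≥ 0. Then x_K ≥ (1 - ((1-γ)/(1+γ))^K·(1-1/K)^K) / ((1+γ)K/(1-γ) - K + 1) · OPT'. -/
theorem noisy_greedy_recursion (K : ℕ) (hK : 1 ≤ K) (γ OPT' : ℝ)
    (hγ0 : 0 < γ) (hγ1 : γ < 1) (hOPT : 0 ≤ OPT')
    (x : ℕ → ℝ) (hx0 : x 0 = 0)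
    (hrec : ∀ i < K,
      x (i + 1) ≥ ((1 - γ) / (1 + γ)) * ((1 - 1 / (K : ℝ)) * x i + OPT' / K)) :
    x K ≥ (1 - ((1 - γ) / (1 + γ)) ^ K * (1 - 1 / (K : ℝ)) ^ K)
      / ((1 + γ) * (K : ℝ) / (1 - γ) - (K : ℝ) + 1) * OPT' := by
  have hKpos : (0 : ℝ) < K := by exact_mod_cast hK
  have hKne : (K : ℝ) ≠ 0 := ne_of_gt hKpos
  have h1γ : (0 : ℝ) < 1 - γ := by linarith
  have h1γ' : (0 : ℝ) < 1 + γ := by linarith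
  set ρ : ℝ := (1 - γ) / (1 + γ) with hρ
  have hρpos : 0 < ρ := div_pos h1γ h1γ'
  have hρlt : ρ < 1 := by
    rw [hρ, div_lt_one h1γ']; linarith
  have hc0 : (0 : ℝ) ≤ 1 - 1 / (K : ℝ) := by
    have : 1 / (K : ℝ) ≤ 1 := by
      rw [div_le_one hKpos]; exact_mod_cast hK
    linarith
  have hc1 : 1 - 1 / (K : ℝ) < 1 := by
    have : 0 < 1 / (K : ℝ) := by positivity
    linarith
  set a : ℝ := ρ * (1 - 1 / (K : ℝ)) with ha
  have ha0 : 0 ≤ a := by positivity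
  have ha1 : a < 1 := by
    calc a ≤ 1 * (1 - 1 / (K : ℝ)) := by
          apply mul_le_mul_of_nonneg_right (le_of_lt hρlt) hc0
      _ < 1 := by simpa using hc1
  set b : ℝ := ρ * (OPT' / K) with hb
  have hb0 : 0 ≤ b := by positivity
  have key : ∀ i, i ≤ K → x i ≥ b * ∑ j ∈ Finset.range i, a ^ j := by
    intro i
    induction i with
    | zero => intro _; simp [hx0]
    | succ n ih =>
      intro hn
      have hnK : n < K := hn
      have h1 := hrec n hnK
      have h2 := ih (le_of_lt hnK)
      have : x (n + 1) ≥ a * x n + b := by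
        rw [ha, hb]
        calc x (n+1) ≥ ρ * ((1 - 1 / (K : ℝ)) * x n + OPT' / K) := h1
          _ = ρ * (1 - 1 / (K : ℝ)) * x n + ρ * (OPT' / K) := by ring
      have h3 : a * x n ≥ a * (b * ∑ j ∈ Finset.range n, a ^ j) :=
        mul_le_mul_of_nonneg_left h2 ha0
      calc x (n + 1) ≥ a * x n + b := this
        _ ≥ a * (b * ∑ j ∈ Finset.range n, a ^ j) + b := by linarith
        _ = b * ∑ j ∈ Finset.range (n + 1), a ^ j := by
            rw [geom_sum_succ]
            ring
  have hxK := key K le_rfl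
  have hgeom : ∑ j ∈ Finset.range K, a ^ j = (1 - a ^ K) / (1 - a) := by
    rw [geom_sum_eq (ne_of_lt ha1)]
    rw [div_eq_div_iff (by linarith : a - 1 ≠ 0) (by linarith : 1 - a ≠ 0)]
    ring
  have hD : (0 : ℝ) < (1 + γ) * (K : ℝ) / (1 - γ) - (K : ℝ) + 1 := by
    have : (K : ℝ) ≤ (1 + γ) * (K : ℝ) / (1 - γ) := by
      rw [le_div_iff₀ h1γ]
      nlinarith
    linarith
  have hDne : ((1 + γ) * (K : ℝ) / (1 - γ) - (K : ℝ) + 1) ≠ 0 := ne_of_gt hD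
  have h1ane : (1 : ℝ) - a ≠ 0 := by linarith
  have h : OPT' * (1 - a) = b * ((1 + γ) * (K : ℝ) / (1 - γ) - (K : ℝ) + 1) := by
    rw [hb, ha, hρ]
    field_simp
    ring
  have hP : ρ ^ K * (1 - 1 / (K : ℝ)) ^ K = a ^ K := by rw [ha, mul_pow]
  have heq : (1 - ρ ^ K * (1 - 1 / (K : ℝ)) ^ K)
      / ((1 + γ) * (K : ℝ) / (1 - γ) - (K : ℝ) + 1) * OPT'
      = b * ((1 - a ^ K) / (1 - a)) := by
    rw [hP, div_mul_eq_mul_div, mul_div_assoc' b, div_eq_div_iff hDne h1ane]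
    linear_combination (1 - a ^ K) * h
  rw [heq]
  calc b * ((1 - a ^ K) / (1 - a)) = b * ∑ j ∈ Finset.range K, a ^ j := by rw [hgeom]
    _ ≤ x K := hxK
end
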